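/- Suppose G̃ : ℝ × (0,∞) × ℝ → ℝ satisfies ‖G̃(·,t;·)‖: sup_x ∫_ℝ |G̃(x,t;y)| dy ≤ C₁, sup_{x,y} |∂_y G̃(x,t;y)| ≤ C₂ t^{-1}, and sup_x ∫_ℝ |∂_y G̃(x,t;y)| dy ≤ C₃ t^{-1/2}. Suppose v₀ : ℝ → ℝ satisfies |v₀(y)| ≤ E₀(1+|y|)^{-3/2} and ∫_ℝ v₀ = 0. Then for all x ∈ ℝ and t > 0, |∫_ℝ G̃(x,t;y) v₀(y) dy| ≤ C E₀ (1+t)^{-3/4}, where C depends only on C₁, C₂, C₃. -/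

import Mathlib

open MeasureTheory Set Real

lemma hd_half {y : ℝ} (hy : (0:ℝ) < 1 + y) :
    HasDerivAt (fun z : ℝ => 2 * (1+z) ^ ((1:ℝ)/2)) ((1+y) ^ (-(1:ℝ)/2)) y := by
  have h1 : HasDerivAt (fun z : ℝ => 1 + z) 1 y := (hasDerivAt_id y).const_add 1
  have h2 := (h1.rpow_const (p := (1:ℝ)/2) (Or.inl hy.ne')).const_mul 2
  refine h2.congr_deriv ?_
  rw [show (1:ℝ)/2 - 1 = -(1:ℝ)/2 by norm_num]
  ring

lemma hd_neghalf {y : ℝ} (hy : (0:ℝ) < 1 + y) :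
    HasDerivAt (fun z : ℝ => -2 * (1+z) ^ (-(1:ℝ)/2)) ((1+y) ^ (-(3:ℝ)/2)) y := by
  have h1 : HasDerivAt (fun z : ℝ => 1 + z) 1 y := (hasDerivAt_id y).const_add 1
  have h2 := (h1.rpow_const (p := -(1:ℝ)/2) (Or.inl hy.ne')).const_mul (-2)
  refine h2.congr_deriv ?_
  rw [show -(1:ℝ)/2 - 1 = -(3:ℝ)/2 by norm_num]
  ring

lemma tendsto0 : Filter.Tendsto (fun z : ℝ => -2 * (1+z) ^ (-(1:ℝ)/2)) Filter.atTop (nhds 0) := by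
  have h1 : Filter.Tendsto (fun x : ℝ => x ^ (-((1:ℝ)/2))) Filter.atTop (nhds 0) :=
    tendsto_rpow_neg_atTop (by norm_num)
  have h2 : Filter.Tendsto (fun z : ℝ => (1:ℝ) + z) Filter.atTop Filter.atTop :=
    Filter.tendsto_atTop_add_const_left _ 1 Filter.tendsto_id
  have h3 := (h1.comp h2).const_mul (-2)
  have : -(1:ℝ)/2 = -((1:ℝ)/2) := by norm_num
  rw [this]
  simpa [Function.comp_def, mul_comm] using h3

lemma tail_Ioi (R : ℝ) (hR : 0 ≤ R) :
    IntegrableOn (fun y : ℝ => (1+y) ^ (-(3:ℝ)/2)) (Ioi R) ∧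
    ∫ y in Ioi R, (1+y) ^ (-(3:ℝ)/2) = 2 * (1+R) ^ (-(1:ℝ)/2) := by
  have hderiv : ∀ y ∈ Ici R, HasDerivAt (fun z : ℝ => -2 * (1+z) ^ (-(1:ℝ)/2))
      ((1+y) ^ (-(3:ℝ)/2)) y := fun y hy => hd_neghalf (by have : R ≤ y := hy; linarith)
  have hpos : ∀ y ∈ Ioi R, 0 ≤ (1+y) ^ (-(3:ℝ)/2) := fun y hy =>
    Real.rpow_nonneg (by have : R < y := hy; linarith) _
  refine ⟨integrableOn_Ioi_deriv_of_nonneg' hderiv hpos tendsto0, ?_⟩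
  rw [integral_Ioi_of_hasDerivAt_of_nonneg' hderiv hpos tendsto0]
  ring

lemma tail_full (R : ℝ) (hR : 0 ≤ R) :
    IntegrableOn (fun y : ℝ => (1+|y|) ^ (-(3:ℝ)/2)) (Icc (-R) R)ᶜ ∧
    ∫ y in (Icc (-R) R)ᶜ, (1+|y|) ^ (-(3:ℝ)/2) ≤ 4 * (1+R) ^ (-(1:ℝ)/2) := by
  obtain ⟨hInt, hVal⟩ := tail_Ioi R hR
  have hEq : EqOn (fun y : ℝ => (1+y) ^ (-(3:ℝ)/2)) (fun y : ℝ => (1+|y|) ^ (-(3:ℝ)/2))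
      (Ioi R) := by
    intro y hy
    have hy' : (0:ℝ) < y := lt_of_le_of_lt hR hy
    simp [abs_of_pos hy']
  have hIntIoi : IntegrableOn (fun y : ℝ => (1+|y|) ^ (-(3:ℝ)/2)) (Ioi R) :=
    hInt.congr_fun hEq measurableSet_Ioi
  have hValIoi : ∫ y in Ioi R, (1+|y|) ^ (-(3:ℝ)/2) = 2 * (1+R) ^ (-(1:ℝ)/2) :=
    (setIntegral_congr_fun measurableSet_Ioi hEq).symm.trans hVal
  have m : MeasurableEmbedding fun x : ℝ => -x := (Homeomorph.neg ℝ).measurableEmbedding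
  have hIntIic : IntegrableOn (fun y : ℝ => (1+|y|) ^ (-(3:ℝ)/2)) (Iic (-R)) := by
    rw [IntegrableOn, ← Measure.map_neg_eq_self (volume : Measure ℝ),
      ← IntegrableOn, m.integrableOn_map_iff]
    simp_rw [Function.comp_def, abs_neg, neg_preimage, neg_Iic, neg_neg]
    exact Iff.mpr integrableOn_Ici_iff_integrableOn_Ioi hIntIoi
  have hValIic : ∫ y in Iic (-R), (1+|y|) ^ (-(3:ℝ)/2) = 2 * (1+R) ^ (-(1:ℝ)/2) := by
    have h := integral_comp_neg_Ioi R (fun y : ℝ => (1+|y|) ^ (-(3:ℝ)/2))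
    simp only [abs_neg] at h
    rw [← h]
    exact hValIoi
  have hIntIio : IntegrableOn (fun y : ℝ => (1+|y|) ^ (-(3:ℝ)/2)) (Iio (-R)) :=
    hIntIic.mono_set Iio_subset_Iic_self
  have hValIio : ∫ y in Iio (-R), (1+|y|) ^ (-(3:ℝ)/2) = 2 * (1+R) ^ (-(1:ℝ)/2) :=
    (integral_Iic_eq_integral_Iio).symm.trans hValIic
  have hdisj : Disjoint (Iio (-R)) (Ioi R) :=
    (Iio_disjoint_Ici (by linarith)).mono_right Ioi_subset_Ici_self
  have hcompl : (Icc (-R) R)ᶜ = Iio (-R) ∪ Ioi R := by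
    ext y
    simp only [mem_compl_iff, mem_Icc, not_and_or, not_le, mem_union, mem_Iio, mem_Ioi]
  rw [hcompl]
  refine ⟨hIntIio.union hIntIoi, ?_⟩
  rw [setIntegral_union hdisj measurableSet_Ioi hIntIio hIntIoi, hValIio, hValIoi]
  have : (0:ℝ) ≤ (1+R) ^ (-(1:ℝ)/2) := Real.rpow_nonneg (by linarith) _
  linarith

lemma front (R : ℝ) (hR : 0 ≤ R) :
    ∫ y in Icc (-R) R, (1+|y|) ^ (-(1:ℝ)/2) ≤ 4 * (1+R) ^ ((1:ℝ)/2) := by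
  have hcont : Continuous (fun y : ℝ => (1+|y|) ^ (-(1:ℝ)/2)) :=
    Continuous.rpow_const (continuous_const.add continuous_abs)
      (fun y => Or.inl (by positivity))
  have h1 : ∫ y in Icc (-R) R, (1+|y|) ^ (-(1:ℝ)/2)
      = ∫ y in (-R)..R, (1+|y|) ^ (-(1:ℝ)/2) := by
    rw [intervalIntegral.integral_of_le (by linarith), integral_Icc_eq_integral_Ioc]
  have hsplit := intervalIntegral.integral_add_adjacent_intervals
    (a := -R) (b := 0) (c := R) (f := fun y : ℝ => (1+|y|) ^ (-(1:ℝ)/2)) (μ := volume)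
    (hcont.intervalIntegrable _ _) (hcont.intervalIntegrable _ _)
  have hrefl : ∫ y in (-R)..(0:ℝ), (1+|y|) ^ (-(1:ℝ)/2)
      = ∫ y in (0:ℝ)..R, (1+|y|) ^ (-(1:ℝ)/2) := by
    have h := intervalIntegral.integral_comp_neg (a := (0:ℝ)) (b := R)
      (fun y : ℝ => (1+|y|) ^ (-(1:ℝ)/2))
    simp only [abs_neg, neg_zero] at h
    exact h.symm
  have hval : ∫ y in (0:ℝ)..R, (1+|y|) ^ (-(1:ℝ)/2) = 2*(1+R) ^ ((1:ℝ)/2) - 2 := by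
    have hEq : EqOn (fun y : ℝ => (1+|y|) ^ (-(1:ℝ)/2)) (fun y : ℝ => (1+y) ^ (-(1:ℝ)/2))
        (Set.uIcc 0 R) := by
      intro y hy
      rw [uIcc_of_le hR] at hy
      simp [abs_of_nonneg hy.1]
    rw [intervalIntegral.integral_congr hEq]
    have hcont2 : ContinuousOn (fun y : ℝ => (1+y) ^ (-(1:ℝ)/2)) (Set.uIcc 0 R) := by
      apply ContinuousOn.rpow_const (continuousOn_const.add continuousOn_id)
      intro y hy
      rw [uIcc_of_le hR] at hy
      exact Or.inl (by have := hy.1; show (1:ℝ) + y ≠ 0; positivity)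
    rw [intervalIntegral.integral_eq_sub_of_hasDerivAt
      (fun y hy => hd_half (by rw [uIcc_of_le hR] at hy; have := hy.1; positivity))
      (hcont2.intervalIntegrable)]
    norm_num
  rw [h1, ← hsplit, hrefl, hval]
  have : (0:ℝ) ≤ (1+R) ^ ((1:ℝ)/2) := Real.rpow_nonneg (by linarith) _
  linarith

set_option maxHeartbeats 1000000 in
theorem stmt4 (C₁ C₂ C₃ : ℝ) (hC₁ : 0 < C₁) (hC₂ : 0 < C₂) (hC₃ : 0 < C₃) :
    ∃ C : ℝ, 0 < C ∧ ∀ (G G' : ℝ → ℝ → ℝ → ℝ) (v₀ : ℝ → ℝ) (E₀ : ℝ), 0 < E₀ →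
      (∀ x t y, 0 < t → HasDerivAt (fun y => G x t y) (G' x t y) y) →
      (∀ x t, 0 < t → MeasureTheory.Integrable (fun y => G x t y)) →
      (∀ x t, 0 < t → MeasureTheory.Integrable (fun y => G' x t y)) →
      (∀ x t, 0 < t → (∫ y : ℝ, |G x t y|) ≤ C₁) →
      (∀ x t y, 0 < t → |G' x t y| ≤ C₂ / t) →
      (∀ x t, 0 < t → (∫ y : ℝ, |G' x t y|) ≤ C₃ / Real.sqrt t) →
      MeasureTheory.Integrable v₀ →
      (∀ y, |v₀ y| ≤ E₀ * (1 + |y|) ^ (-(3 : ℝ) / 2)) →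
      (∫ y : ℝ, v₀ y) = 0 →
      ∀ x t, 0 < t → |∫ y : ℝ, G x t y * v₀ y| ≤ C * E₀ * (1 + t) ^ (-(3 : ℝ) / 4) := by
  refine ⟨16 * (C₁ + C₂ + C₃), by positivity, ?_⟩
  intro G G' v₀ E₀ hE₀ hder hGint hG'int hGbd hG'bd hG'intbd hv₀int hv₀bd hv₀sum x t ht
  have hwle1 : ∀ y : ℝ, (1+|y|) ^ (-(3:ℝ)/2) ≤ 1 := fun y =>
    Real.rpow_le_one_of_one_le_of_nonpos (by simp [abs_nonneg]) (by norm_num)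
  have hwnn : ∀ y : ℝ, 0 ≤ (1+|y|) ^ (-(3:ℝ)/2) := fun y => Real.rpow_nonneg (by positivity) _
  have hv₀E : ∀ y, |v₀ y| ≤ E₀ := fun y => (hv₀bd y).trans (by nlinarith [hwle1 y, hwnn y])
  have hint : MeasureTheory.Integrable (fun y => G x t y * v₀ y) := by
    have h := (hGint x t ht).bdd_mul hv₀int.aestronglyMeasurable
      (Filter.Eventually.of_forall fun y => by simpa [Real.norm_eq_abs] using hv₀E y)
    simpa [mul_comm] using h
  have hFTC : ∀ y : ℝ, G x t y - G x t 0 = ∫ u in (0:ℝ)..y, G' x t u := fun y =>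
    (intervalIntegral.integral_eq_sub_of_hasDerivAt (fun u _ => hder x t u ht)
      ((hG'int x t ht).intervalIntegrable)).symm
  have hH1 : ∀ y : ℝ, |G x t y - G x t 0| ≤ C₂/t * |y| := by
    intro y
    rw [hFTC y]
    have h := intervalIntegral.norm_integral_le_of_norm_le_const
      (C := C₂/t) (f := fun u => G' x t u) (a := 0) (b := y)
      (fun u _ => by simpa [Real.norm_eq_abs] using hG'bd x t u ht)
    simpa [Real.norm_eq_abs, sub_zero] using h
  have habs : ∀ y : ℝ, abs (∫ u in (0:ℝ)..y, |G' x t u|) ≤ ∫ u, |G' x t u| := by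
    intro y
    have hnn : ∀ᵐ u : ℝ, 0 ≤ |G' x t u| := Filter.Eventually.of_forall fun u => abs_nonneg _
    rcases le_total 0 y with h | h
    · rw [intervalIntegral.integral_of_le h,
        abs_of_nonneg (MeasureTheory.setIntegral_nonneg measurableSet_Ioc fun u _ => abs_nonneg _)]
      exact MeasureTheory.setIntegral_le_integral (hG'int x t ht).abs hnn
    · rw [intervalIntegral.integral_symm y 0, abs_neg, intervalIntegral.integral_of_le h,
        abs_of_nonneg (MeasureTheory.setIntegral_nonneg measurableSet_Ioc fun u _ => abs_nonneg _)]
      exact MeasureTheory.setIntegral_le_integral (hG'int x t ht).abs hnn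
  have hH2 : ∀ y : ℝ, |G x t y - G x t 0| ≤ C₃ / Real.sqrt t := by
    intro y
    rw [hFTC y]
    calc |∫ u in (0:ℝ)..y, G' x t u| ≤ abs (∫ u in (0:ℝ)..y, |G' x t u|) := by
          simpa [Real.norm_eq_abs] using
            intervalIntegral.norm_integral_le_abs_integral_norm
              (f := fun u => G' x t u) (a := 0) (b := y) (μ := MeasureTheory.volume)
      _ ≤ ∫ u, |G' x t u| := habs y
      _ ≤ C₃ / Real.sqrt t := hG'intbd x t ht
  have hHint : MeasureTheory.Integrable (fun y => (G x t y - G x t 0) * v₀ y) := by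
    simp only [sub_mul]
    exact hint.sub (hv₀int.const_mul _)
  have hEqInt : ∫ y, G x t y * v₀ y = ∫ y, (G x t y - G x t 0) * v₀ y := by
    simp only [sub_mul]
    rw [MeasureTheory.integral_sub hint (hv₀int.const_mul _),
      MeasureTheory.integral_const_mul, hv₀sum, mul_zero, sub_zero]
  rcases le_total t 1 with ht1 | ht1
  · -- small time
    have h1 : |∫ y, G x t y * v₀ y| ≤ C₁ * E₀ := by
      calc |∫ y, G x t y * v₀ y| ≤ ∫ y, |G x t y * v₀ y| := by
            have h := MeasureTheory.norm_integral_le_integral_norm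
              (μ := MeasureTheory.volume) (fun y => G x t y * v₀ y)
            simp only [Real.norm_eq_abs] at h
            exact h
        _ ≤ ∫ y, E₀ * |G x t y| := by
            apply MeasureTheory.integral_mono hint.abs ((hGint x t ht).abs.const_mul E₀)
            intro y
            dsimp only
            rw [abs_mul]
            have h := hv₀E y
            nlinarith [abs_nonneg (G x t y), abs_nonneg (v₀ y)]
        _ = E₀ * ∫ y, |G x t y| := MeasureTheory.integral_const_mul _ _
        _ ≤ C₁ * E₀ := by
            have := mul_le_mul_of_nonneg_left (hGbd x t ht) hE₀.le
            linarith
    have hpow : (1:ℝ)/2 ≤ (1+t) ^ (-(3:ℝ)/4) := by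
      have h2 : (1+t) ^ ((3:ℝ)/4) ≤ 2 := by
        calc (1+t) ^ ((3:ℝ)/4) ≤ 2 ^ ((3:ℝ)/4) :=
              Real.rpow_le_rpow (by linarith) (by linarith) (by norm_num)
          _ ≤ 2 ^ (1:ℝ) := Real.rpow_le_rpow_of_exponent_le (by norm_num) (by norm_num)
          _ = 2 := Real.rpow_one 2
      have hp : 0 < (1+t) ^ ((3:ℝ)/4) := Real.rpow_pos_of_pos (by linarith) _
      rw [show -(3:ℝ)/4 = -((3:ℝ)/4) by norm_num, Real.rpow_neg (by linarith)]
      have h3 := inv_anti₀ hp h2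
      have h4 : (2:ℝ)⁻¹ = 1/2 := by norm_num
      linarith
    have key : 16*(C₁+C₂+C₃)*E₀*(1/2) ≤ 16*(C₁+C₂+C₃)*E₀*((1+t) ^ (-(3:ℝ)/4)) :=
      mul_le_mul_of_nonneg_left hpow (by positivity)
    have : C₁*E₀ ≤ 16*(C₁+C₂+C₃)*E₀*(1/2) := by nlinarith [mul_pos hC₂ hE₀, mul_pos hC₃ hE₀]
    calc |∫ y, G x t y * v₀ y| ≤ C₁ * E₀ := h1
      _ ≤ 16*(C₁+C₂+C₃)*E₀*((1+t) ^ (-(3:ℝ)/4)) := by linarith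
      _ = 16 * (C₁ + C₂ + C₃) * E₀ * (1 + t) ^ (-(3:ℝ)/4) := by ring
  · -- large time
    set R := Real.sqrt t with hRdef
    have hR1 : 1 ≤ R := by
      have h := Real.sqrt_le_sqrt ht1
      rwa [Real.sqrt_one] at h
    have hR0 : (0:ℝ) ≤ R := by linarith
    have hRpos : (0:ℝ) < R := by linarith
    obtain ⟨hIntTail, hValTail⟩ := tail_full R hR0
    have hbd1 : ∀ y : ℝ, |(G x t y - G x t 0) * v₀ y| ≤ (C₂*E₀/t) * (1+|y|) ^ (-(1:ℝ)/2) := by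
      intro y
      rw [abs_mul]
      have h3 : |y| * (1+|y|) ^ (-(3:ℝ)/2) ≤ (1+|y|) ^ (-(1:ℝ)/2) := by
        have h4 : |y| * (1+|y|) ^ (-(3:ℝ)/2) ≤ (1+|y|) * (1+|y|) ^ (-(3:ℝ)/2) :=
          mul_le_mul_of_nonneg_right (by linarith [abs_nonneg y]) (hwnn y)
        have h5 : (1+|y|) * (1+|y|) ^ (-(3:ℝ)/2) = (1+|y|) ^ (-(1:ℝ)/2) := by
          rw [show -(1:ℝ)/2 = 1 + -(3:ℝ)/2 by norm_num, Real.rpow_add (by positivity),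
            Real.rpow_one]
        linarith
      calc |G x t y - G x t 0| * |v₀ y|
          ≤ (C₂/t * |y|) * (E₀ * (1+|y|) ^ (-(3:ℝ)/2)) :=
            mul_le_mul (hH1 y) (hv₀bd y) (abs_nonneg _) (by positivity)
        _ = (C₂*E₀/t) * (|y| * (1+|y|) ^ (-(3:ℝ)/2)) := by ring
        _ ≤ (C₂*E₀/t) * (1+|y|) ^ (-(1:ℝ)/2) :=
            mul_le_mul_of_nonneg_left h3 (by positivity)
    have hbd2 : ∀ y : ℝ, |(G x t y - G x t 0) * v₀ y| ≤ (C₃*E₀/R) * (1+|y|) ^ (-(3:ℝ)/2) := by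
      intro y
      rw [abs_mul]
      calc |G x t y - G x t 0| * |v₀ y|
          ≤ (C₃/R) * (E₀ * (1+|y|) ^ (-(3:ℝ)/2)) :=
            mul_le_mul (hH2 y) (hv₀bd y) (abs_nonneg _) (by positivity)
        _ = (C₃*E₀/R) * (1+|y|) ^ (-(3:ℝ)/2) := by ring
    have hcontu : Continuous (fun y : ℝ => (C₂*E₀/t) * (1+|y|) ^ (-(1:ℝ)/2)) :=
      continuous_const.mul (Continuous.rpow_const (continuous_const.add continuous_abs)
        (fun y => Or.inl (by positivity)))
    have hIs : MeasureTheory.IntegrableOn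
        (fun y : ℝ => (C₂*E₀/t) * (1+|y|) ^ (-(1:ℝ)/2)) (Icc (-R) R) :=
      hcontu.integrableOn_Icc
    have hmain1 : ∫ y in Icc (-R) R, |(G x t y - G x t 0) * v₀ y|
        ≤ (C₂*E₀/t) * (4 * (1+R) ^ ((1:ℝ)/2)) := by
      calc ∫ y in Icc (-R) R, |(G x t y - G x t 0) * v₀ y|
          ≤ ∫ y in Icc (-R) R, (C₂*E₀/t) * (1+|y|) ^ (-(1:ℝ)/2) :=
            MeasureTheory.setIntegral_mono_on hHint.abs.integrableOn hIs
              measurableSet_Icc (fun y _ => hbd1 y)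
        _ = (C₂*E₀/t) * ∫ y in Icc (-R) R, (1+|y|) ^ (-(1:ℝ)/2) :=
            MeasureTheory.integral_const_mul _ _
        _ ≤ _ := mul_le_mul_of_nonneg_left (front R hR0) (by positivity)
    have hmain2 : ∫ y in (Icc (-R) R)ᶜ, |(G x t y - G x t 0) * v₀ y|
        ≤ (C₃*E₀/R) * (4 * (1+R) ^ (-(1:ℝ)/2)) := by
      calc ∫ y in (Icc (-R) R)ᶜ, |(G x t y - G x t 0) * v₀ y|
          ≤ ∫ y in (Icc (-R) R)ᶜ, (C₃*E₀/R) * (1+|y|) ^ (-(3:ℝ)/2) :=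
            MeasureTheory.setIntegral_mono_on hHint.abs.integrableOn
              (hIntTail.const_mul _) measurableSet_Icc.compl (fun y _ => hbd2 y)
        _ = (C₃*E₀/R) * ∫ y in (Icc (-R) R)ᶜ, (1+|y|) ^ (-(3:ℝ)/2) :=
            MeasureTheory.integral_const_mul _ _
        _ ≤ _ := mul_le_mul_of_nonneg_left hValTail (by positivity)
    have htotal : |∫ y, G x t y * v₀ y|
        ≤ (C₂*E₀/t) * (4 * (1+R) ^ ((1:ℝ)/2)) + (C₃*E₀/R) * (4 * (1+R) ^ (-(1:ℝ)/2)) := by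
      rw [hEqInt]
      calc |∫ y, (G x t y - G x t 0) * v₀ y|
          ≤ ∫ y, |(G x t y - G x t 0) * v₀ y| := by
            have h := MeasureTheory.norm_integral_le_integral_norm
              (μ := MeasureTheory.volume) (fun y => (G x t y - G x t 0) * v₀ y)
            simp only [Real.norm_eq_abs] at h
            exact h
        _ = (∫ y in Icc (-R) R, |(G x t y - G x t 0) * v₀ y|)
            + ∫ y in (Icc (-R) R)ᶜ, |(G x t y - G x t 0) * v₀ y| :=
            (MeasureTheory.integral_add_compl measurableSet_Icc hHint.abs).symm
        _ ≤ _ := add_le_add hmain1 hmain2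
    -- rpow arithmetic
    have hReq : R = t ^ ((1:ℝ)/2) := Real.sqrt_eq_rpow t
    have hRq : R ^ ((1:ℝ)/2) = t ^ ((1:ℝ)/4) := by
      rw [hReq, ← Real.rpow_mul ht.le]
      norm_num
    have hRq2 : R ^ (-(1:ℝ)/2) = t ^ (-(1:ℝ)/4) := by
      rw [hReq, ← Real.rpow_mul ht.le]
      norm_num
    have ha : (1+R) ^ ((1:ℝ)/2) ≤ 2 * t ^ ((1:ℝ)/4) := by
      calc (1+R) ^ ((1:ℝ)/2) ≤ (2*R) ^ ((1:ℝ)/2) :=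
            Real.rpow_le_rpow (by linarith) (by linarith) (by norm_num)
        _ = 2 ^ ((1:ℝ)/2) * R ^ ((1:ℝ)/2) := Real.mul_rpow (by norm_num) hR0
        _ ≤ 2 * t ^ ((1:ℝ)/4) := by
            rw [hRq]
            have h2 : (2:ℝ) ^ ((1:ℝ)/2) ≤ 2 := by
              calc (2:ℝ) ^ ((1:ℝ)/2) ≤ 2 ^ (1:ℝ) :=
                    Real.rpow_le_rpow_of_exponent_le (by norm_num) (by norm_num)
                _ = 2 := Real.rpow_one 2
            have h3 : (0:ℝ) ≤ t ^ ((1:ℝ)/4) := Real.rpow_nonneg ht.le _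
            nlinarith
    have hb : (1+R) ^ (-(1:ℝ)/2) ≤ t ^ (-(1:ℝ)/4) := by
      rw [← hRq2]
      exact Real.rpow_le_rpow_of_nonpos hRpos (by linarith) (by norm_num)
    have hq1 : t ^ ((1:ℝ)/4) / t = t ^ (-(3:ℝ)/4) := by
      rw [div_eq_mul_inv, ← Real.rpow_neg_one t, ← Real.rpow_add ht]
      norm_num
    have hq2 : t ^ (-(1:ℝ)/4) / R = t ^ (-(3:ℝ)/4) := by
      rw [hReq, div_eq_mul_inv, ← Real.rpow_neg ht.le, ← Real.rpow_add ht]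
      norm_num
    have hterm1 : (C₂*E₀/t) * (4 * (1+R) ^ ((1:ℝ)/2)) ≤ 8*C₂*E₀ * t ^ (-(3:ℝ)/4) := by
      have h1 : (C₂*E₀/t) * (4 * (1+R) ^ ((1:ℝ)/2)) ≤ (C₂*E₀/t) * (4 * (2 * t ^ ((1:ℝ)/4))) :=
        mul_le_mul_of_nonneg_left (by linarith) (by positivity)
      have h2 : (C₂*E₀/t) * (4 * (2 * t ^ ((1:ℝ)/4))) = 8*C₂*E₀ * (t ^ ((1:ℝ)/4) / t) := by
        ring
      rw [h2, hq1] at h1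
      exact h1
    have hterm2 : (C₃*E₀/R) * (4 * (1+R) ^ (-(1:ℝ)/2)) ≤ 4*C₃*E₀ * t ^ (-(3:ℝ)/4) := by
      have h1 : (C₃*E₀/R) * (4 * (1+R) ^ (-(1:ℝ)/2)) ≤ (C₃*E₀/R) * (4 * t ^ (-(1:ℝ)/4)) :=
        mul_le_mul_of_nonneg_left (by linarith) (by positivity)
      have h2 : (C₃*E₀/R) * (4 * t ^ (-(1:ℝ)/4)) = 4*C₃*E₀ * (t ^ (-(1:ℝ)/4) / R) := by
        ring
      rw [h2, hq2] at h1
      exact h1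
    have hd : t ^ (-(3:ℝ)/4) ≤ 2 * (1+t) ^ (-(3:ℝ)/4) := by
      have e1 : (1+t) ^ ((3:ℝ)/4) ≤ 2 * t ^ ((3:ℝ)/4) := by
        calc (1+t) ^ ((3:ℝ)/4) ≤ (2*t) ^ ((3:ℝ)/4) :=
              Real.rpow_le_rpow (by linarith) (by linarith) (by norm_num)
          _ = 2 ^ ((3:ℝ)/4) * t ^ ((3:ℝ)/4) := Real.mul_rpow (by norm_num) ht.le
          _ ≤ 2 * t ^ ((3:ℝ)/4) := by
              have h2 : (2:ℝ) ^ ((3:ℝ)/4) ≤ 2 := by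
                calc (2:ℝ) ^ ((3:ℝ)/4) ≤ 2 ^ (1:ℝ) :=
                      Real.rpow_le_rpow_of_exponent_le (by norm_num) (by norm_num)
                  _ = 2 := Real.rpow_one 2
              have h3 : (0:ℝ) ≤ t ^ ((3:ℝ)/4) := Real.rpow_nonneg ht.le _
              nlinarith
      have ha' : (0:ℝ) < t ^ ((3:ℝ)/4) := Real.rpow_pos_of_pos ht _
      have hb' : (0:ℝ) < (1+t) ^ ((3:ℝ)/4) := Real.rpow_pos_of_pos (by linarith) _
      have h5 := inv_anti₀ hb' e1
      have h6 : (2 * t ^ ((3:ℝ)/4))⁻¹ = (t ^ ((3:ℝ)/4))⁻¹ * (1/2) := by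
        rw [mul_inv]; ring
      rw [show -(3:ℝ)/4 = -((3:ℝ)/4) by norm_num, Real.rpow_neg ht.le,
        Real.rpow_neg (by linarith : (0:ℝ) ≤ 1+t)]
      rw [h6] at h5
      linarith
    have hfin : |∫ y, G x t y * v₀ y| ≤ (8*C₂*E₀ + 4*C₃*E₀) * t ^ (-(3:ℝ)/4) := by
      calc |∫ y, G x t y * v₀ y|
          ≤ (C₂*E₀/t) * (4 * (1+R) ^ ((1:ℝ)/2)) + (C₃*E₀/R) * (4 * (1+R) ^ (-(1:ℝ)/2)) := htotal
        _ ≤ 8*C₂*E₀ * t ^ (-(3:ℝ)/4) + 4*C₃*E₀ * t ^ (-(3:ℝ)/4) := add_le_add hterm1 hterm2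
        _ = (8*C₂*E₀ + 4*C₃*E₀) * t ^ (-(3:ℝ)/4) := by ring
    have hpos1 : (0:ℝ) ≤ (1+t) ^ (-(3:ℝ)/4) := Real.rpow_nonneg (by linarith) _
    have hstep : (8*C₂*E₀ + 4*C₃*E₀) * t ^ (-(3:ℝ)/4)
        ≤ (8*C₂*E₀ + 4*C₃*E₀) * (2 * (1+t) ^ (-(3:ℝ)/4)) :=
      mul_le_mul_of_nonneg_left hd (by positivity)
    calc |∫ y, G x t y * v₀ y| ≤ (8*C₂*E₀ + 4*C₃*E₀) * t ^ (-(3:ℝ)/4) := hfin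
      _ ≤ (8*C₂*E₀ + 4*C₃*E₀) * (2 * (1+t) ^ (-(3:ℝ)/4)) := hstep
      _ ≤ 16 * (C₁ + C₂ + C₃) * E₀ * (1 + t) ^ (-(3:ℝ)/4) := by
          nlinarith [mul_pos hC₁ hE₀, mul_pos hC₃ hE₀, mul_nonneg (mul_pos hC₁ hE₀).le hpos1,
            mul_nonneg (mul_pos hC₃ hE₀).le hpos1]
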